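/- The gauge sphere ∂B_R(0,0,t₀) ⊂ ℍⁿ (n ≥ 2) is horizontally umbilic with A_M(Z) = (2r/R²)⟨η,Z⟩η + (r/R²)Z for all horizontal tangent vectors Z, i.e., it is umbilic with l = 3k and k(ξ) = |ξ^H|/R². -/

import Mathlib

open scoped BigOperators

/-- Points of the Heisenberg group `ℍⁿ = ℝⁿ × ℝⁿ × ℝ`. -/
abbrev Hpt (n : ℕ) := (Fin n → ℝ) × (Fin n → ℝ) × ℝ

/-- Horizontal vectors, written in the frame `{X₁,…,Xₙ,Y₁,…,Yₙ}`. -/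
abbrev HV (n : ℕ) := (Fin n → ℝ) × (Fin n → ℝ)

noncomputable section

/-- Inner product on the horizontal space (the frame `{Xⱼ, Yⱼ}` is orthonormal). -/
def innerHV {n : ℕ} (v w : HV n) : ℝ := ∑ j, v.1 j * w.1 j + ∑ j, v.2 j * w.2 j

/-- The complex structure `J` on the horizontal space: `J Xⱼ = Yⱼ`, `J Yⱼ = -Xⱼ`. -/
def Jmap {n : ℕ} (v : HV n) : HV n := (-v.2, v.1)

/-- Horizontal part of the position vector: `ξ^H = ∑ xⱼ Xⱼ + yⱼ Yⱼ`. -/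
def xiH {n : ℕ} (ξ : Hpt n) : HV n := (ξ.1, ξ.2.1)

/-- `|ξ^H| = √(|x|² + |y|²)`. -/
def normH {n : ℕ} (ξ : Hpt n) : ℝ := Real.sqrt (innerHV (xiH ξ) (xiH ξ))

/-- Coordinate representation of the horizontal vector `Z = ∑ αⱼ Xⱼ + βⱼ Yⱼ` at `ξ`
(using `Xⱼ = ∂_{xⱼ} - 2yⱼ∂_t`, `Yⱼ = ∂_{yⱼ} + 2xⱼ∂_t`). -/
def coordOfH {n : ℕ} (Z : HV n) (ξ : Hpt n) : Hpt n :=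
  (Z.1, Z.2, ∑ j, (-2 * Z.1 j * ξ.2.1 j + 2 * Z.2 j * ξ.1 j))

/-- Coordinate representation of a full frame vector `v = ∑ aⱼ Xⱼ + bⱼ Yⱼ + c T` at `ξ`. -/
def coordOfF {n : ℕ} (v : Hpt n) (ξ : Hpt n) : Hpt n :=
  (v.1, v.2.1, v.2.2 + ∑ j, (-2 * v.1 j * ξ.2.1 j + 2 * v.2.1 j * ξ.1 j))

/-- Inner product on the full tangent space in the orthonormal frame `{Xⱼ, Yⱼ, T}`. -/
def innerF {n : ℕ} (v w : Hpt n) : ℝ :=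
  ∑ j, v.1 j * w.1 j + ∑ j, v.2.1 j * w.2.1 j + v.2.2 * w.2.2

/-- Levi-Civita covariant derivative `∇_Z W` of a horizontal vector field `W`
along a horizontal vector `Z`, expressed in the frame `{Xⱼ, Yⱼ, T}`; the `T`-component
comes from `∇_{Xᵢ}Yⱼ = 2δᵢⱼT`, `∇_{Yᵢ}Xⱼ = -2δᵢⱼT`. -/
def hCovDeriv {n : ℕ} (Z : HV n) (W : Hpt n → HV n) (ξ : Hpt n) : Hpt n :=
  ((fderiv ℝ W ξ (coordOfH Z ξ)).1, (fderiv ℝ W ξ (coordOfH Z ξ)).2,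
    2 * ∑ i, (Z.1 i * (W ξ).2 i - Z.2 i * (W ξ).1 i))

/-- Levi-Civita covariant derivative `∇_U W` of a horizontal vector field `W` along a full
frame vector `U`, using additionally `∇_T Xⱼ = -2Yⱼ`, `∇_T Yⱼ = 2Xⱼ`. -/
def fullCovDeriv {n : ℕ} (U : Hpt n) (W : Hpt n → HV n) (ξ : Hpt n) : Hpt n :=
  ((fderiv ℝ W ξ (coordOfF U ξ)).1 + (2 * U.2.2) • (W ξ).2,
   (fderiv ℝ W ξ (coordOfF U ξ)).2 - (2 * U.2.2) • (W ξ).1,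
   2 * ∑ i, (U.1 i * (W ξ).2 i - U.2.1 i * (W ξ).1 i))

/-- The coordinate direction of `Xⱼ = ∂_{xⱼ} - 2yⱼ∂_t` at `ξ`. -/
def Xdir {n : ℕ} (j : Fin n) (ξ : Hpt n) : Hpt n := (Pi.single j 1, 0, -2 * ξ.2.1 j)

/-- The coordinate direction of `Yⱼ = ∂_{yⱼ} + 2xⱼ∂_t` at `ξ`. -/
def Ydir {n : ℕ} (j : Fin n) (ξ : Hpt n) : Hpt n := (0, Pi.single j 1, 2 * ξ.1 j)

/-- `Xⱼ u`. -/
def XD {n : ℕ} (u : Hpt n → ℝ) (j : Fin n) (ξ : Hpt n) : ℝ := fderiv ℝ u ξ (Xdir j ξ)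

/-- `Yⱼ u`. -/
def YD {n : ℕ} (u : Hpt n → ℝ) (j : Fin n) (ξ : Hpt n) : ℝ := fderiv ℝ u ξ (Ydir j ξ)

/-- `T u = ∂_t u`. -/
def TD {n : ℕ} (u : Hpt n → ℝ) (ξ : Hpt n) : ℝ := fderiv ℝ u ξ (0, 0, 1)

/-- The horizontal gradient `∇_H u = ∑ (Xⱼu) Xⱼ + (Yⱼu) Yⱼ` in frame components. -/
def hgrad {n : ℕ} (u : Hpt n → ℝ) (ξ : Hpt n) : HV n :=
  (fun j => XD u j ξ, fun j => YD u j ξ)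

/-- Frame components of a coordinate vector `w` at the point `ξ`. -/
def frameAt {n : ℕ} (w : Hpt n) (ξ : Hpt n) : Hpt n :=
  (w.1, w.2.1, w.2.2 + ∑ j, (2 * w.1 j * ξ.2.1 j - 2 * w.2.1 j * ξ.1 j))

/-- A horizontal vector field viewed as a frame vector field with zero `T`-component. -/
def hlift {n : ℕ} (Z : Hpt n → HV n) : Hpt n → Hpt n := fun ξ => ((Z ξ).1, (Z ξ).2, 0)

/-- Coordinate representation of a frame vector field. -/
def coordVF {n : ℕ} (U : Hpt n → Hpt n) : Hpt n → Hpt n := fun ξ => coordOfF (U ξ) ξ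

/-- The Lie bracket `[U, V]` of two frame vector fields, expressed again in frame components. -/
def bracket {n : ℕ} (U V : Hpt n → Hpt n) (ξ : Hpt n) : Hpt n :=
  frameAt (fderiv ℝ (coordVF V) ξ (coordVF U ξ) - fderiv ℝ (coordVF U) ξ (coordVF V ξ)) ξ

/-- The Heisenberg group law. -/
def Hop {n : ℕ} (a b : Hpt n) : Hpt n :=
  (a.1 + b.1, a.2.1 + b.2.1,
    a.2.2 + b.2.2 + 2 * ∑ k, (a.1 k * b.2.1 k - a.2.1 k * b.1 k))

/-- The homogeneous gauge `ρ(ξ) = ((|x|²+|y|²)² + t²)^(1/4)`. -/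
def hGauge {n : ℕ} (ξ : Hpt n) : ℝ :=
  ((∑ j, ξ.1 j ^ 2 + ∑ j, ξ.2.1 j ^ 2) ^ 2 + ξ.2.2 ^ 2) ^ ((1 : ℝ) / 4)

/-- The anisotropic dilations `δ_R(x,y,t) = (Rx, Ry, R²t)`. -/
def dil {n : ℕ} (R : ℝ) (ξ : Hpt n) : Hpt n :=
  (fun j => R * ξ.1 j, fun j => R * ξ.2.1 j, R ^ 2 * ξ.2.2)

end

/-- Defining function of the gauge sphere ∂B_R(0,0,t₀). -/
noncomputable def uSph {n : ℕ} (t₀ R : ℝ) : Hpt n → ℝ := fun ξ =>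
  (∑ j, ξ.1 j ^ 2 + ∑ j, ξ.2.1 j ^ 2) ^ 2 + (ξ.2.2 - t₀) ^ 2 - R ^ 4

/-- Distance to the t-axis: r = √(|x|² + |y|²). -/
noncomputable def rad {n : ℕ} (ξ : Hpt n) : ℝ :=
  Real.sqrt (∑ j, ξ.1 j ^ 2 + ∑ j, ξ.2.1 j ^ 2)

/-- The horizontal unit normal of the gauge sphere: ν^H = ∇_H u / |∇_H u|. -/
noncomputable def nuHgauge {n : ℕ} (t₀ R : ℝ) (ξ : Hpt n) : HV n :=
  (Real.sqrt (innerHV (hgrad (uSph t₀ R) ξ) (hgrad (uSph t₀ R) ξ)))⁻¹ • hgrad (uSph t₀ R) ξ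

/-- η = −Jν^H for the gauge sphere. -/
noncomputable def etaGauge {n : ℕ} (t₀ R : ℝ) (ξ : Hpt n) : HV n :=
  -(Jmap (nuHgauge t₀ R ξ))
namespace GaugeAux

open ContinuousLinearMap

variable {n : ℕ}

noncomputable def pX (j : Fin n) : Hpt n →L[ℝ] ℝ :=
  (ContinuousLinearMap.proj j).comp (ContinuousLinearMap.fst ℝ (Fin n → ℝ) ((Fin n → ℝ) × ℝ))
noncomputable def pY (j : Fin n) : Hpt n →L[ℝ] ℝ :=
  ((ContinuousLinearMap.proj j).comp (ContinuousLinearMap.fst ℝ (Fin n → ℝ) ℝ)).comp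
    (ContinuousLinearMap.snd ℝ (Fin n → ℝ) ((Fin n → ℝ) × ℝ))
noncomputable def pT : Hpt n →L[ℝ] ℝ :=
  (ContinuousLinearMap.snd ℝ (Fin n → ℝ) ℝ).comp
    (ContinuousLinearMap.snd ℝ (Fin n → ℝ) ((Fin n → ℝ) × ℝ))

@[simp] lemma pX_apply (j : Fin n) (v : Hpt n) : pX j v = v.1 j := rfl
@[simp] lemma pY_apply (j : Fin n) (v : Hpt n) : pY j v = v.2.1 j := rfl
@[simp] lemma pT_apply (v : Hpt n) : pT v = v.2.2 := rfl

lemma hasFDerivAt_X (j : Fin n) (ξ : Hpt n) :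
    HasFDerivAt (fun ξ : Hpt n => ξ.1 j) (pX j) ξ := (pX j).hasFDerivAt
lemma hasFDerivAt_Y (j : Fin n) (ξ : Hpt n) :
    HasFDerivAt (fun ξ : Hpt n => ξ.2.1 j) (pY j) ξ := (pY j).hasFDerivAt
lemma hasFDerivAt_T (ξ : Hpt n) :
    HasFDerivAt (fun ξ : Hpt n => ξ.2.2) (pT : Hpt n →L[ℝ] ℝ) ξ := pT.hasFDerivAt

/-- `|x|²+|y|²`. -/
noncomputable def Sf (ξ : Hpt n) : ℝ := ∑ j, ξ.1 j ^ 2 + ∑ j, ξ.2.1 j ^ 2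

noncomputable def DSf (ξ : Hpt n) : Hpt n →L[ℝ] ℝ :=
  ∑ j, (2 * ξ.1 j) • pX j + ∑ j, (2 * ξ.2.1 j) • pY j

lemma hasFDerivAt_Sf (ξ : Hpt n) : HasFDerivAt (Sf (n := n)) (DSf ξ) ξ := by
  have h1 : ∀ j : Fin n, HasFDerivAt (fun ξ : Hpt n => ξ.1 j ^ 2) ((2 * ξ.1 j) • pX j) ξ := by
    intro j
    simpa [Function.comp_def] using (hasDerivAt_pow 2 (ξ.1 j)).comp_hasFDerivAt ξ (hasFDerivAt_X j ξ)
  have h2 : ∀ j : Fin n, HasFDerivAt (fun ξ : Hpt n => ξ.2.1 j ^ 2) ((2 * ξ.2.1 j) • pY j) ξ := by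
    intro j
    simpa [Function.comp_def] using (hasDerivAt_pow 2 (ξ.2.1 j)).comp_hasFDerivAt ξ (hasFDerivAt_Y j ξ)
  exact (HasFDerivAt.fun_sum fun j _ => h1 j).add (HasFDerivAt.fun_sum fun j _ => h2 j)

lemma hasFDerivAt_uSph (t₀ R : ℝ) (ξ : Hpt n) :
    HasFDerivAt (uSph t₀ R (n := n))
      ((2 * Sf ξ) • DSf ξ + (2 * (ξ.2.2 - t₀)) • (pT : Hpt n →L[ℝ] ℝ)) ξ := by
  have h1 := (hasDerivAt_pow 2 (Sf ξ)).comp_hasFDerivAt ξ (hasFDerivAt_Sf ξ)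
  have h2 := (hasDerivAt_pow 2 (ξ.2.2 - t₀)).comp_hasFDerivAt ξ ((hasFDerivAt_T ξ).sub_const t₀)
  have h3 := (h1.add h2).sub_const (R ^ 4)
  show HasFDerivAt (fun ξ : Hpt n => (Sf ξ) ^ 2 + (ξ.2.2 - t₀) ^ 2 - R ^ 4) _ ξ
  simpa [Sf, Function.comp_def] using h3

lemma fderiv_uSph_apply (t₀ R : ℝ) (ξ v : Hpt n) :
    fderiv ℝ (uSph t₀ R) ξ v =
      2 * Sf ξ * (2 * ∑ j, ξ.1 j * v.1 j + 2 * ∑ j, ξ.2.1 j * v.2.1 j)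
        + 2 * (ξ.2.2 - t₀) * v.2.2 := by
  rw [(hasFDerivAt_uSph t₀ R ξ).fderiv]
  simp only [ContinuousLinearMap.add_apply, ContinuousLinearMap.coe_smul', Pi.smul_apply,
    DSf, ContinuousLinearMap.coe_sum', Finset.sum_apply, pX_apply, pY_apply, pT_apply,
    smul_eq_mul]
  rw [show ∑ j, 2 * ξ.1 j * v.1 j = 2 * ∑ j, ξ.1 j * v.1 j by
        rw [Finset.mul_sum]; exact Finset.sum_congr rfl fun j _ => by ring,
      show ∑ j, 2 * ξ.2.1 j * v.2.1 j = 2 * ∑ j, ξ.2.1 j * v.2.1 j by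
        rw [Finset.mul_sum]; exact Finset.sum_congr rfl fun j _ => by ring]

end GaugeAux
namespace GaugeAux
variable {n : ℕ}

lemma hgrad_uSph (t₀ R : ℝ) (ξ : Hpt n) :
    hgrad (uSph t₀ R) ξ =
      ((fun j => 4 * Sf ξ * ξ.1 j - 4 * (ξ.2.2 - t₀) * ξ.2.1 j),
       (fun j => 4 * Sf ξ * ξ.2.1 j + 4 * (ξ.2.2 - t₀) * ξ.1 j)) := by
  refine Prod.ext ?_ ?_ <;> funext j <;>
    simp only [hgrad, XD, YD, Xdir, Ydir, fderiv_uSph_apply] <;>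
    simp [Pi.single_apply, mul_ite, Finset.sum_ite_eq'] <;> ring

lemma innerHV_hgrad (t₀ R : ℝ) (ξ : Hpt n) :
    innerHV (hgrad (uSph t₀ R) ξ) (hgrad (uSph t₀ R) ξ)
      = 16 * ((Sf ξ) ^ 2 + (ξ.2.2 - t₀) ^ 2) * Sf ξ := by
  rw [hgrad_uSph, innerHV]
  rw [← Finset.sum_add_distrib]
  rw [show (∑ j, ((4 * Sf ξ * ξ.1 j - 4 * (ξ.2.2 - t₀) * ξ.2.1 j) *
        (4 * Sf ξ * ξ.1 j - 4 * (ξ.2.2 - t₀) * ξ.2.1 j) +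
        (4 * Sf ξ * ξ.2.1 j + 4 * (ξ.2.2 - t₀) * ξ.1 j) *
        (4 * Sf ξ * ξ.2.1 j + 4 * (ξ.2.2 - t₀) * ξ.1 j)))
      = ∑ j, 16 * ((Sf ξ) ^ 2 + (ξ.2.2 - t₀) ^ 2) * (ξ.1 j ^ 2 + ξ.2.1 j ^ 2) from
    Finset.sum_congr rfl fun j _ => by ring]
  rw [← Finset.mul_sum, Finset.sum_add_distrib]
  rfl

lemma nuHgauge_eq (t₀ R : ℝ) (ξ : Hpt n) :
    nuHgauge t₀ R ξ =
      (Real.sqrt (16 * ((Sf ξ) ^ 2 + (ξ.2.2 - t₀) ^ 2) * Sf ξ))⁻¹ •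
        (((fun j => 4 * Sf ξ * ξ.1 j - 4 * (ξ.2.2 - t₀) * ξ.2.1 j),
          (fun j => 4 * Sf ξ * ξ.2.1 j + 4 * (ξ.2.2 - t₀) * ξ.1 j)) : HV n) := by
  rw [nuHgauge, innerHV_hgrad, hgrad_uSph]

lemma TD_uSph (t₀ R : ℝ) (ξ : Hpt n) : TD (uSph t₀ R) ξ = 2 * (ξ.2.2 - t₀) := by
  rw [TD, fderiv_uSph_apply]
  simp

end GaugeAux
namespace GaugeAux
variable {n : ℕ}

noncomputable def Qf (t₀ : ℝ) (ξ : Hpt n) : ℝ :=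
  16 * ((Sf ξ) ^ 2 + (ξ.2.2 - t₀) ^ 2) * Sf ξ

noncomputable def Gv (t₀ : ℝ) (ξ : Hpt n) : HV n :=
  ((fun j => 4 * Sf ξ * ξ.1 j - 4 * (ξ.2.2 - t₀) * ξ.2.1 j),
   (fun j => 4 * Sf ξ * ξ.2.1 j + 4 * (ξ.2.2 - t₀) * ξ.1 j))

/-- directional derivative of `Sf` along `v` (Z-first atom order). -/
noncomputable def DSv (ξ v : Hpt n) : ℝ :=
  2 * ∑ j, v.1 j * ξ.1 j + 2 * ∑ j, v.2.1 j * ξ.2.1 j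

noncomputable def DQv (t₀ : ℝ) (ξ v : Hpt n) : ℝ :=
  16 * ((2 * Sf ξ * DSv ξ v + 2 * (ξ.2.2 - t₀) * v.2.2) * Sf ξ
        + ((Sf ξ) ^ 2 + (ξ.2.2 - t₀) ^ 2) * DSv ξ v)

noncomputable def DGv (t₀ : ℝ) (ξ v : Hpt n) : HV n :=
  ((fun j => 4 * DSv ξ v * ξ.1 j + 4 * Sf ξ * v.1 j
      - 4 * v.2.2 * ξ.2.1 j - 4 * (ξ.2.2 - t₀) * v.2.1 j),
   (fun j => 4 * DSv ξ v * ξ.2.1 j + 4 * Sf ξ * v.2.1 j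
      + 4 * v.2.2 * ξ.1 j + 4 * (ξ.2.2 - t₀) * v.1 j))

lemma fderiv_nu_apply (t₀ R : ℝ) (ξ : Hpt n) (hq : 0 < Qf t₀ ξ) (v : Hpt n) :
    fderiv ℝ (nuHgauge t₀ R) ξ v =
      (Real.sqrt (Qf t₀ ξ))⁻¹ • DGv t₀ ξ v
        + (-(((Real.sqrt (Qf t₀ ξ)) ^ 2)⁻¹ * (1 / (2 * Real.sqrt (Qf t₀ ξ)) * DQv t₀ ξ v)))
            • Gv t₀ ξ := by
  have hτ := (hasFDerivAt_T ξ).sub_const t₀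
  have hS := hasFDerivAt_Sf ξ
  have hq' : Qf t₀ ξ ≠ 0 := ne_of_gt hq
  have h1 := (hasDerivAt_pow 2 (Sf ξ)).comp_hasFDerivAt ξ hS
  have h2 := (hasDerivAt_pow 2 (ξ.2.2 - t₀)).comp_hasFDerivAt ξ hτ
  have hQ : HasFDerivAt (fun ξ : Hpt n => Qf t₀ ξ) _ ξ := ((h1.add h2).const_mul (16 : ℝ)).mul hS
  have hsqrtQ := (Real.hasDerivAt_sqrt hq').comp_hasFDerivAt ξ hQ
  have hNne : Real.sqrt (Qf t₀ ξ) ≠ 0 := (Real.sqrt_pos.mpr hq).ne'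
  have hinv := (hasDerivAt_inv hNne).comp_hasFDerivAt ξ hsqrtQ
  have hg1 : ∀ j : Fin n, HasFDerivAt
      (fun ξ : Hpt n => 4 * Sf ξ * ξ.1 j - 4 * (ξ.2.2 - t₀) * ξ.2.1 j)
      ((4 * Sf ξ) • pX j + ξ.1 j • ((4:ℝ) • DSf ξ)
        - ((4 * (ξ.2.2 - t₀)) • pY j + ξ.2.1 j • ((4:ℝ) • pT))) ξ :=
    fun j => ((hS.const_mul 4).mul (hasFDerivAt_X j ξ)).sub
      ((hτ.const_mul 4).mul (hasFDerivAt_Y j ξ))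
  have hg2 : ∀ j : Fin n, HasFDerivAt
      (fun ξ : Hpt n => 4 * Sf ξ * ξ.2.1 j + 4 * (ξ.2.2 - t₀) * ξ.1 j)
      ((4 * Sf ξ) • pY j + ξ.2.1 j • ((4:ℝ) • DSf ξ)
        + ((4 * (ξ.2.2 - t₀)) • pX j + ξ.1 j • ((4:ℝ) • pT))) ξ :=
    fun j => ((hS.const_mul 4).mul (hasFDerivAt_Y j ξ)).add
      ((hτ.const_mul 4).mul (hasFDerivAt_X j ξ))
  have hG : HasFDerivAt
      (fun ξ : Hpt n => (((fun j => 4 * Sf ξ * ξ.1 j - 4 * (ξ.2.2 - t₀) * ξ.2.1 j),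
          (fun j => 4 * Sf ξ * ξ.2.1 j + 4 * (ξ.2.2 - t₀) * ξ.1 j)) : HV n)) _ ξ :=
    HasFDerivAt.prodMk (hasFDerivAt_pi.mpr hg1) (hasFDerivAt_pi.mpr hg2)
  have hν := HasFDerivAt.smul hinv hG
  have hν' := hν.congr_of_eventuallyEq
    (Filter.Eventually.of_forall (fun a => nuHgauge_eq t₀ R a))
  rw [hν'.fderiv]
  refine Prod.ext ?_ ?_ <;> funext j <;>
    simp only [ContinuousLinearMap.add_apply, ContinuousLinearMap.coe_smul', Pi.smul_apply,
      ContinuousLinearMap.smulRight_apply, ContinuousLinearMap.prod_apply,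
      ContinuousLinearMap.pi_apply, ContinuousLinearMap.coe_sum', Finset.sum_apply,
      ContinuousLinearMap.sub_apply, pX_apply, pY_apply, pT_apply, smul_eq_mul,
      DSf, Qf, Gv, DGv, DSv, DQv, Prod.fst_add, Prod.snd_add, Prod.smul_mk,
      Prod.fst_sub, Prod.snd_sub, Function.comp_apply, Pi.add_apply, Pi.sub_apply, Pi.neg_apply, Prod.mk_add_mk,
      pow_one, Nat.cast_ofNat] <;>
    rw [show (∑ k, 2 * ξ.1 k * v.1 k) = 2 * ∑ k, v.1 k * ξ.1 k from by
          rw [Finset.mul_sum]; exact Finset.sum_congr rfl fun k _ => by ring,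
        show (∑ k, 2 * ξ.2.1 k * v.2.1 k) = 2 * ∑ k, v.2.1 k * ξ.2.1 k from by
          rw [Finset.mul_sum]; exact Finset.sum_congr rfl fun k _ => by ring] <;>
    ring

end GaugeAux
namespace GaugeAux
variable {n : ℕ}

lemma sum_split (F u w : Fin n → ℝ) (a b : ℝ) (hF : ∀ j, F j = a * u j + b * w j) :
    Finset.univ.sum F = a * Finset.univ.sum u + b * Finset.univ.sum w := by
  rw [Finset.mul_sum, Finset.mul_sum, ← Finset.sum_add_distrib]
  exact Finset.sum_congr rfl fun j _ => hF j

end GaugeAux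

/-- The gauge sphere in ℍⁿ (n ≥ 2) is horizontally umbilic:
for every horizontal tangent vector Z at a non-characteristic point,
A_M(Z) = P_H(∇_Z ν^H) − (2⟨ν,T⟩/|P_H ν|)(J(Z) − ⟨η,Z⟩ν^H)
       = (2r/R²)⟨η,Z⟩η + (r/R²)Z,
i.e. it is umbilic with l = 3k and k = |ξ^H|/R².  Here
2⟨ν,T⟩/|P_H ν| = 2Tu/|∇_H u|. -/
theorem gauge_sphere_umbilic (n : ℕ) (hn : 2 ≤ n) (t₀ R : ℝ) (hR : 0 < R)
    (ξ : Hpt n) (hmem : uSph t₀ R ξ = 0) (hr : 0 < rad ξ)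
    (Z : HV n) (htan : innerHV Z (nuHgauge t₀ R ξ) = 0) :
    ((hCovDeriv Z (nuHgauge t₀ R) ξ).1, (hCovDeriv Z (nuHgauge t₀ R) ξ).2.1)
      - (2 * TD (uSph t₀ R) ξ /
          Real.sqrt (innerHV (hgrad (uSph t₀ R) ξ) (hgrad (uSph t₀ R) ξ)))
        • (Jmap Z - innerHV (etaGauge t₀ R ξ) Z • nuHgauge t₀ R ξ)
    = (2 * rad ξ / R ^ 2 * innerHV (etaGauge t₀ R ξ) Z) • etaGauge t₀ R ξ
      + (rad ξ / R ^ 2) • Z := by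
  have hSnn : (0:ℝ) ≤ GaugeAux.Sf ξ := by
    simp only [GaugeAux.Sf]; positivity
  have hS0 : GaugeAux.Sf ξ = rad ξ ^ 2 := (Real.sq_sqrt hSnn).symm
  have hrne : rad ξ ≠ 0 := ne_of_gt hr
  have hRne : R ≠ 0 := ne_of_gt hR
  have hA : GaugeAux.Sf ξ ^ 2 + (ξ.2.2 - t₀) ^ 2 = R ^ 4 := by
    have h := hmem
    simp only [uSph] at h
    simp only [GaugeAux.Sf]
    linarith
  have hq : 0 < GaugeAux.Qf t₀ ξ := by
    show (0:ℝ) < 16 * ((GaugeAux.Sf ξ) ^ 2 + (ξ.2.2 - t₀) ^ 2) * GaugeAux.Sf ξ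
    rw [hA, hS0]
    positivity
  have hN : Real.sqrt (GaugeAux.Qf t₀ ξ) = 4 * R ^ 2 * rad ξ := by
    rw [show GaugeAux.Qf t₀ ξ = (4 * R ^ 2 * rad ξ) ^ 2 from by
      simp only [GaugeAux.Qf]; rw [hA, hS0]; ring]
    exact Real.sqrt_sq (by positivity)
  have hN'' : Real.sqrt (16 * ((GaugeAux.Sf ξ) ^ 2 + (ξ.2.2 - t₀) ^ 2) * GaugeAux.Sf ξ)
      = 4 * R ^ 2 * rad ξ := hN
  have hN' : Real.sqrt (innerHV (hgrad (uSph t₀ R) ξ) (hgrad (uSph t₀ R) ξ))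
      = 4 * R ^ 2 * rad ξ := by
    rw [GaugeAux.innerHV_hgrad, hN'']
  have hν0 : nuHgauge t₀ R ξ = (4 * R ^ 2 * rad ξ)⁻¹ •
      (((fun j => 4 * GaugeAux.Sf ξ * ξ.1 j - 4 * (ξ.2.2 - t₀) * ξ.2.1 j),
        (fun j => 4 * GaugeAux.Sf ξ * ξ.2.1 j + 4 * (ξ.2.2 - t₀) * ξ.1 j)) : HV n) := by
    rw [GaugeAux.nuHgauge_eq, hN'']
  have hη : etaGauge t₀ R ξ =
      ((fun j => (4 * R ^ 2 * rad ξ)⁻¹ *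
          (4 * GaugeAux.Sf ξ * ξ.2.1 j + 4 * (ξ.2.2 - t₀) * ξ.1 j)),
       (fun j => -((4 * R ^ 2 * rad ξ)⁻¹ *
          (4 * GaugeAux.Sf ξ * ξ.1 j - 4 * (ξ.2.2 - t₀) * ξ.2.1 j)))) := by
    rw [etaGauge, hν0]
    refine Prod.ext ?_ ?_ <;> funext j <;>
      simp [Jmap, smul_eq_mul]
  -- tangency in scalar form
  have h0 := htan
  rw [hν0, innerHV] at h0
  simp only [Prod.smul_mk, Pi.smul_apply, smul_eq_mul] at h0
  rw [GaugeAux.sum_split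
        (fun j => Z.1 j * ((4 * R ^ 2 * rad ξ)⁻¹ *
          (4 * GaugeAux.Sf ξ * ξ.1 j - 4 * (ξ.2.2 - t₀) * ξ.2.1 j)))
        (fun j => Z.1 j * ξ.1 j) (fun j => Z.1 j * ξ.2.1 j)
        ((4 * R ^ 2 * rad ξ)⁻¹ * (4 * GaugeAux.Sf ξ))
        (-((4 * R ^ 2 * rad ξ)⁻¹ * (4 * (ξ.2.2 - t₀)))) (fun j => by ring),
      GaugeAux.sum_split
        (fun j => Z.2 j * ((4 * R ^ 2 * rad ξ)⁻¹ *
          (4 * GaugeAux.Sf ξ * ξ.2.1 j + 4 * (ξ.2.2 - t₀) * ξ.1 j)))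
        (fun j => Z.2 j * ξ.2.1 j) (fun j => Z.2 j * ξ.1 j)
        ((4 * R ^ 2 * rad ξ)⁻¹ * (4 * GaugeAux.Sf ξ))
        ((4 * R ^ 2 * rad ξ)⁻¹ * (4 * (ξ.2.2 - t₀))) (fun j => by ring)] at h0
  have h0' : (4 * R ^ 2 * rad ξ)⁻¹ *
      (4 * (GaugeAux.Sf ξ * ((∑ j, Z.1 j * ξ.1 j) + (∑ j, Z.2 j * ξ.2.1 j))
        + (ξ.2.2 - t₀) * ((∑ j, Z.2 j * ξ.1 j) - (∑ j, Z.1 j * ξ.2.1 j)))) = 0 := by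
    linear_combination h0
  have htan2 : GaugeAux.Sf ξ * ((∑ j, Z.1 j * ξ.1 j) + (∑ j, Z.2 j * ξ.2.1 j))
      + (ξ.2.2 - t₀) * ((∑ j, Z.2 j * ξ.1 j) - (∑ j, Z.1 j * ξ.2.1 j)) = 0 := by
    have h4 : (4 * R ^ 2 * rad ξ)⁻¹ ≠ 0 := inv_ne_zero (by positivity)
    have := (mul_eq_zero.mp h0').resolve_left h4
    linarith
  rw [hS0] at htan2 hA
  -- eta inner product
  have he : innerHV (etaGauge t₀ R ξ) Z = (4 * R ^ 2 * rad ξ)⁻¹ *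
      (4 * GaugeAux.Sf ξ * (∑ j, Z.1 j * ξ.2.1 j) + 4 * (ξ.2.2 - t₀) * (∑ j, Z.1 j * ξ.1 j)
        - 4 * GaugeAux.Sf ξ * (∑ j, Z.2 j * ξ.1 j)
        + 4 * (ξ.2.2 - t₀) * (∑ j, Z.2 j * ξ.2.1 j)) := by
    rw [hη, innerHV]
    rw [GaugeAux.sum_split
          (fun j => ((4 * R ^ 2 * rad ξ)⁻¹ *
            (4 * GaugeAux.Sf ξ * ξ.2.1 j + 4 * (ξ.2.2 - t₀) * ξ.1 j)) * Z.1 j)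
          (fun j => Z.1 j * ξ.2.1 j) (fun j => Z.1 j * ξ.1 j)
          ((4 * R ^ 2 * rad ξ)⁻¹ * (4 * GaugeAux.Sf ξ))
          ((4 * R ^ 2 * rad ξ)⁻¹ * (4 * (ξ.2.2 - t₀))) (fun j => by ring),
        GaugeAux.sum_split
          (fun j => (-((4 * R ^ 2 * rad ξ)⁻¹ *
            (4 * GaugeAux.Sf ξ * ξ.1 j - 4 * (ξ.2.2 - t₀) * ξ.2.1 j))) * Z.2 j)
          (fun j => Z.2 j * ξ.1 j) (fun j => Z.2 j * ξ.2.1 j)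
          (-((4 * R ^ 2 * rad ξ)⁻¹ * (4 * GaugeAux.Sf ξ)))
          ((4 * R ^ 2 * rad ξ)⁻¹ * (4 * (ξ.2.2 - t₀))) (fun j => by ring)]
    ring
  -- the third coordinate of coordOfH Z ξ
  have hv22 : (∑ j, (-2 * Z.1 j * ξ.2.1 j + 2 * Z.2 j * ξ.1 j))
      = -2 * (∑ j, Z.1 j * ξ.2.1 j) + 2 * (∑ j, Z.2 j * ξ.1 j) :=
    GaugeAux.sum_split _ (fun j => Z.1 j * ξ.2.1 j) (fun j => Z.2 j * ξ.1 j)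
      (-2) 2 (fun j => by ring)
  -- rewrite the goal
  have hpair : ∀ W : Hpt n → HV n,
      ((hCovDeriv Z W ξ).1, (hCovDeriv Z W ξ).2.1) = fderiv ℝ W ξ (coordOfH Z ξ) :=
    fun W => rfl
  rw [hpair, GaugeAux.fderiv_nu_apply t₀ R ξ hq, hN, GaugeAux.TD_uSph, hN', he, hη, hν0]
  refine Prod.ext ?_ ?_ <;> funext j <;>
    simp only [GaugeAux.DGv, GaugeAux.Gv, GaugeAux.DSv, GaugeAux.DQv, coordOfH, Jmap,
      Prod.fst_add, Prod.snd_add, Prod.fst_sub, Prod.snd_sub, Prod.smul_mk, Prod.mk_sub_mk,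
      Prod.mk_add_mk, Pi.add_apply, Pi.sub_apply, Pi.smul_apply, Pi.neg_apply,
      smul_eq_mul, hv22, hS0, Prod.smul_fst, Prod.smul_snd] <;>
    [skip; skip]
  · linear_combination (norm := (field_simp; ring1))
      (-(rad ξ ^ 2 * ξ.1 j - (ξ.2.2 - t₀) * ξ.2.1 j) / (R ^ 6 * rad ξ)) * htan2
      - (2 * (((∑ k, Z.1 k * ξ.1 k) + (∑ k, Z.2 k * ξ.2.1 k)) * ξ.1 j
          - ((∑ k, Z.2 k * ξ.1 k) - (∑ k, Z.1 k * ξ.2.1 k)) * ξ.2.1 j) / (R ^ 6 * rad ξ)) * hA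
  · linear_combination (norm := (field_simp; ring1))
      (-(rad ξ ^ 2 * ξ.2.1 j + (ξ.2.2 - t₀) * ξ.1 j) / (R ^ 6 * rad ξ)) * htan2
      - (2 * (((∑ k, Z.1 k * ξ.1 k) + (∑ k, Z.2 k * ξ.2.1 k)) * ξ.2.1 j
          + ((∑ k, Z.2 k * ξ.1 k) - (∑ k, Z.1 k * ξ.2.1 k)) * ξ.1 j) / (R ^ 6 * rad ξ)) * hA
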